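/- For every function f : ℝ → ℝ there exist graph continuous functions g, h : ℝ → ℝ such that f = g + h. -/
import Mathlib


/-- A function `f : ℝ → ℝ` is *graph continuous* if there is a continuous
`g : ℝ → ℝ` whose graph is contained in the closure of the graph of `f`. -/
def GraphContinuous (f : ℝ → ℝ) : Prop :=
  ∃ g : ℝ → ℝ, Continuous g ∧
    {p : ℝ × ℝ | p.2 = g p.1} ⊆ closure {p : ℝ × ℝ | p.2 = f p.1}

lemma graphcont_of_zero_on_dense (g : ℝ → ℝ) (D : Set ℝ) (hD : Dense D)
    (h0 : ∀ x ∈ D, g x = 0) : GraphContinuous g := by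
  refine ⟨0, continuous_const, ?_⟩
  intro p hp
  have hp0 : p.2 = 0 := hp
  have hsub : D ×ˢ ({0} : Set ℝ) ⊆ {p : ℝ × ℝ | p.2 = g p.1} := by
    rintro ⟨x, y⟩ ⟨hx, hy⟩
    simp only [Set.mem_singleton_iff] at hy
    simpa [Set.mem_setOf_eq, hy] using (h0 x hx).symm
  have hcl := closure_mono hsub
  rw [closure_prod_eq, hD.closure_eq, closure_singleton] at hcl
  exact hcl ⟨Set.mem_univ _, hp0⟩

theorem every_function_sum_of_two_graph_continuous (f : ℝ → ℝ) :
    ∃ g h : ℝ → ℝ, GraphContinuous g ∧ GraphContinuous h ∧ f = g + h := by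
  classical
  set g : ℝ → ℝ := fun x => if Irrational x then f x else 0 with hg
  refine ⟨g, fun x => f x - g x, ?_, ?_, ?_⟩
  · refine graphcont_of_zero_on_dense g (Set.range ((↑) : ℚ → ℝ))
      Rat.denseRange_cast ?_
    intro x hx
    have : ¬ Irrational x := by simpa [Irrational] using hx
    simp [hg, this]
  · refine graphcont_of_zero_on_dense _ {x : ℝ | Irrational x} dense_irrational ?_
    intro x hx
    simp [hg, Set.mem_setOf_eq.mp hx]
  · funext x
    simp [Pi.add_apply]
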